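/- Let L be a seminorm on an order-unit space (A, e) whose null space is exactly ℝe, and define the metric ρ_L on S(A) by ρ_L(μ,ν) = sup{|μ(a) - ν(a)| : L(a) ≤ 1}. Then for r ≥ 0 the following are equivalent: (1) ρ_L(μ,ν) ≤ 2r for all μ, ν ∈ S(A); (2) ‖ã‖~ ≤ r·L~(ã) for all a ∈ A, where ‖·‖~ and L~ are the quotient seminorms on A/(ℝe). -/

import Mathlib

set_option linter.unusedSectionVars false
set_option maxHeartbeats 1000000

namespace OUAux


variable {A : Type*} [NormedAddCommGroup A] [NormedSpace ℝ A] [PartialOrder A]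

theorem le_iff_sub (haddle : ∀ a b c : A, a ≤ b → a + c ≤ b + c) (a b : A) :
    a ≤ b ↔ 0 ≤ b - a := by
  constructor
  · intro h
    have := haddle a b (-a) h
    simpa [sub_eq_add_neg] using this
  · intro h
    have := haddle 0 (b - a) a h
    simpa using this

theorem neg_le_neg' (haddle : ∀ a b c : A, a ≤ b → a + c ≤ b + c) {a b : A}
    (h : a ≤ b) : -b ≤ -a := by
  rw [le_iff_sub haddle] at h ⊢
  simpa [sub_eq_add_neg, add_comm] using h

theorem add_nonneg' (haddle : ∀ a b c : A, a ≤ b → a + c ≤ b + c) {a b : A}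
    (ha : 0 ≤ a) (hb : 0 ≤ b) : 0 ≤ a + b := by
  have h1 := haddle 0 a b ha
  rw [zero_add] at h1
  exact le_trans hb h1

theorem add_le_add'' (haddle : ∀ a b c : A, a ≤ b → a + c ≤ b + c) {a b c d : A}
    (h1 : a ≤ b) (h2 : c ≤ d) : a + c ≤ b + d := by
  rw [le_iff_sub haddle] at h1 h2 ⊢
  have := add_nonneg' haddle h1 h2
  convert this using 1
  abel

theorem e_nonneg (e : A) (he : e ≠ 0)
    (haddle : ∀ a b c : A, a ≤ b → a + c ≤ b + c)
    (hsmulle : ∀ (r : ℝ) (a : A), 0 ≤ r → 0 ≤ a → 0 ≤ r • a)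
    (hnorm : ∀ a : A, ‖a‖ = sInf {r : ℝ | 0 ≤ r ∧ -(r • e) ≤ a ∧ a ≤ r • e}) :
    0 ≤ e := by
  have hS : {r : ℝ | 0 ≤ r ∧ -(r • e) ≤ e ∧ e ≤ r • e}.Nonempty := by
    by_contra hemp
    rw [Set.not_nonempty_iff_eq_empty] at hemp
    have := hnorm e
    rw [hemp, Real.sInf_empty] at this
    exact he (norm_eq_zero.mp this)
  obtain ⟨ρ, hρ0, hρ1, _⟩ := hS
  have h1 : (0 : A) ≤ (ρ + 1) • e := by
    rw [le_iff_sub haddle] at hρ1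
    have : (ρ + 1) • e = e - -(ρ • e) := by
      rw [add_smul, one_smul]; abel
    rw [this]; exact hρ1
  have h2 := hsmulle (ρ + 1)⁻¹ _ (by positivity) h1
  rwa [smul_smul, inv_mul_cancel₀ (by positivity), one_smul] at h2

theorem smul_e_nonneg_iff (e : A) (he : e ≠ 0)
    (haddle : ∀ a b c : A, a ≤ b → a + c ≤ b + c)
    (hsmulle : ∀ (r : ℝ) (a : A), 0 ≤ r → 0 ≤ a → 0 ≤ r • a)
    (he0 : 0 ≤ e) (t : ℝ) :
    0 ≤ t • e ↔ 0 ≤ t := by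
  constructor
  · intro h
    by_contra ht
    push_neg at ht
    have h2 : (0 : A) ≤ (-t) • e := hsmulle _ _ (by linarith) he0
    have h3 : t • e ≤ 0 := by
      have := haddle 0 ((-t) • e) (t • e) h2
      simpa [← add_smul] using this
    have h4 : t • e = 0 := le_antisymm h3 h
    rcases smul_eq_zero.mp h4 with h | h
    · linarith
    · exact he h
  · intro h
    exact hsmulle _ _ h he0

theorem smul_e_le_iff (e : A) (he : e ≠ 0)
    (haddle : ∀ a b c : A, a ≤ b → a + c ≤ b + c)
    (hsmulle : ∀ (r : ℝ) (a : A), 0 ≤ r → 0 ≤ a → 0 ≤ r • a)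
    (he0 : 0 ≤ e) (s t : ℝ) :
    s • e ≤ t • e ↔ s ≤ t := by
  rw [le_iff_sub haddle, ← sub_smul, smul_e_nonneg_iff e he haddle hsmulle he0,
    sub_nonneg]

/-- The sublinear functional `p x = inf {t : x ≤ t e}`. -/
noncomputable def pfun (e : A) (x : A) : ℝ := sInf {t : ℝ | x ≤ t • e}

section pfun

variable (e : A) (he : e ≠ 0)
    (haddle : ∀ a b c : A, a ≤ b → a + c ≤ b + c)
    (hsmulle : ∀ (r : ℝ) (a : A), 0 ≤ r → 0 ≤ a → 0 ≤ r • a)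
    (hunit : ∀ a : A, ∃ r : ℝ, a ≤ r • e)
    (harch : ∀ a : A, (∀ r : ℝ, 0 < r → a ≤ r • e) → a ≤ 0)
    (he0 : 0 ≤ e)
include he haddle hsmulle hunit harch he0

theorem U_nonempty (x : A) : {t : ℝ | x ≤ t • e}.Nonempty := hunit x

theorem U_bddBelow (x : A) : BddBelow {t : ℝ | x ≤ t • e} := by
  obtain ⟨s, hs⟩ := hunit (-x)
  refine ⟨-s, fun t ht => ?_⟩
  have h1 : 0 ≤ t • e - x := (le_iff_sub haddle _ _).mp ht
  have h2 : 0 ≤ s • e - -x := (le_iff_sub haddle _ _).mp hs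
  have h3 : (0 : A) ≤ (t + s) • e := by
    have := add_nonneg' haddle h1 h2
    have heq : t • e - x + (s • e - -x) = (t + s) • e := by
      rw [add_smul]; abel
    rwa [heq] at this
  have := (smul_e_nonneg_iff e he haddle hsmulle he0 (t + s)).mp h3
  linarith

theorem pfun_le {x : A} {t : ℝ} (h : x ≤ t • e) : pfun e x ≤ t :=
  csInf_le (U_bddBelow e he haddle hsmulle hunit harch he0 x) h

theorem le_pfun {x : A} {t : ℝ} (h : ∀ u : ℝ, x ≤ u • e → t ≤ u) : t ≤ pfun e x :=
  le_csInf (hunit x) h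

theorem pfun_spec (x : A) : x ≤ (pfun e x) • e := by
  have key : ∀ ε : ℝ, 0 < ε → x - (pfun e x) • e ≤ ε • e := by
    intro ε hε
    have hlt : sInf {t : ℝ | x ≤ t • e} < pfun e x + ε := by
      simp only [pfun]; linarith
    obtain ⟨t, ht, htlt⟩ := exists_lt_of_csInf_lt (hunit x) hlt
    have h1 : x ≤ (pfun e x + ε) • e := by
      refine le_trans ht ?_
      exact (smul_e_le_iff e he haddle hsmulle he0 _ _).mpr (le_of_lt htlt)
    rw [le_iff_sub haddle] at h1 ⊢
    have heq : ε • e - (x - (pfun e x) • e) = (pfun e x + ε) • e - x := by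
      rw [add_smul]; abel
    rwa [heq]
  have := harch _ key
  rw [le_iff_sub haddle]
  have heq : (pfun e x) • e - x = -(x - (pfun e x) • e) := by abel
  rw [heq]
  simpa using neg_le_neg' haddle this

theorem pfun_add_smul_e (x : A) (s : ℝ) : pfun e (x + s • e) = pfun e x + s := by
  have gen : ∀ (y : A) (u : ℝ), pfun e (y + u • e) ≤ pfun e y + u := by
    intro y u
    refine pfun_le e he haddle hsmulle hunit harch he0 ?_
    have h1 := pfun_spec e he haddle hsmulle hunit harch he0 y
    have := add_le_add'' haddle h1 (le_refl (u • e))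
    rwa [← add_smul] at this
  have h1 := gen x s
  have h2 := gen (x + s • e) (-s)
  have heq : x + s • e + (-s) • e = x := by
    rw [neg_smul]; abel
  rw [heq] at h2
  linarith

theorem pfun_zero : pfun e (0 : A) = 0 := by
  refine le_antisymm (pfun_le e he haddle hsmulle hunit harch he0 (by simp)) ?_
  refine le_pfun e he haddle hsmulle hunit harch he0 (fun u hu => ?_)
  exact (smul_e_nonneg_iff e he haddle hsmulle he0 u).mp hu

theorem pfun_smul_e (s : ℝ) : pfun e (s • e) = s := by
  have := pfun_add_smul_e e he haddle hsmulle hunit harch he0 0 s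
  rw [zero_add] at this
  rw [this, pfun_zero e he haddle hsmulle hunit harch he0, zero_add]

theorem pfun_add (x y : A) : pfun e (x + y) ≤ pfun e x + pfun e y := by
  have hx := pfun_spec e he haddle hsmulle hunit harch he0 x
  have hy := pfun_spec e he haddle hsmulle hunit harch he0 y
  refine pfun_le e he haddle hsmulle hunit harch he0 ?_
  have := add_le_add'' haddle hx hy
  rwa [← add_smul] at this

theorem pfun_smul (c : ℝ) (hc : 0 < c) (x : A) : pfun e (c • x) = c * pfun e x := by
  have gen : ∀ (d : ℝ), 0 < d → ∀ y : A, pfun e (d • y) ≤ d * pfun e y := by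
    intro d hd y
    refine pfun_le e he haddle hsmulle hunit harch he0 ?_
    have h1 := pfun_spec e he haddle hsmulle hunit harch he0 y
    rw [le_iff_sub haddle] at h1 ⊢
    have := hsmulle d _ (le_of_lt hd) h1
    rwa [smul_sub, smul_smul] at this
  refine le_antisymm (gen c hc x) ?_
  have h2 := gen c⁻¹ (by positivity) (c • x)
  rw [smul_smul, inv_mul_cancel₀ (ne_of_gt hc), one_smul] at h2
  have : c * pfun e x ≤ c * (c⁻¹ * pfun e (c • x)) := by
    exact mul_le_mul_of_nonneg_left h2 (le_of_lt hc)
  rwa [← mul_assoc, mul_inv_cancel₀ (ne_of_gt hc), one_mul] at this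

end pfun


section norm

variable (e : A) (he : e ≠ 0)
    (haddle : ∀ a b c : A, a ≤ b → a + c ≤ b + c)
    (hsmulle : ∀ (r : ℝ) (a : A), 0 ≤ r → 0 ≤ a → 0 ≤ r • a)
    (hunit : ∀ a : A, ∃ r : ℝ, a ≤ r • e)
    (harch : ∀ a : A, (∀ r : ℝ, 0 < r → a ≤ r • e) → a ≤ 0)
    (hnorm : ∀ a : A, ‖a‖ = sInf {r : ℝ | 0 ≤ r ∧ -(r • e) ≤ a ∧ a ≤ r • e})
    (he0 : 0 ≤ e)
include he haddle hsmulle hunit harch hnorm he0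

theorem le_norm_smul (x : A) : x ≤ ‖x‖ • e := by
  set S := {r : ℝ | 0 ≤ r ∧ -(r • e) ≤ x ∧ x ≤ r • e} with hS
  have hSne : S.Nonempty := by
    obtain ⟨t, ht⟩ := hunit x
    obtain ⟨s, hs⟩ := hunit (-x)
    refine ⟨max 0 (max t s), by simp, ?_, ?_⟩
    · have h1 : -x ≤ (max 0 (max t s)) • e :=
        le_trans hs ((smul_e_le_iff e he haddle hsmulle he0 _ _).mpr
          (le_max_of_le_right (le_max_right t s)))
      have := neg_le_neg' haddle h1
      rwa [neg_neg] at this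
    · exact le_trans ht ((smul_e_le_iff e he haddle hsmulle he0 _ _).mpr
        (le_max_of_le_right (le_max_left t s)))
  have hSbdd : BddBelow S := ⟨0, fun r hr => hr.1⟩
  have key : ∀ ε : ℝ, 0 < ε → x - ‖x‖ • e ≤ ε • e := by
    intro ε hε
    have hlt : sInf S < ‖x‖ + ε := by rw [← hnorm]; linarith
    obtain ⟨ρ, hρ, hρlt⟩ := exists_lt_of_csInf_lt hSne hlt
    have h1 : x ≤ (‖x‖ + ε) • e :=
      le_trans hρ.2.2 ((smul_e_le_iff e he haddle hsmulle he0 _ _).mpr (le_of_lt hρlt))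
    rw [le_iff_sub haddle] at h1 ⊢
    have heq : ε • e - (x - ‖x‖ • e) = (‖x‖ + ε) • e - x := by rw [add_smul]; abel
    rwa [heq]
  have h2 := harch _ key
  rw [le_iff_sub haddle]
  have heq : ‖x‖ • e - x = -(x - ‖x‖ • e) := by abel
  rw [heq]
  simpa using neg_le_neg' haddle h2

theorem pfun_le_norm (x : A) : pfun e x ≤ ‖x‖ :=
  pfun_le e he haddle hsmulle hunit harch he0
    (le_norm_smul e he haddle hsmulle hunit harch hnorm he0 x)

theorem norm_le_of_le (x : A) (c : ℝ) (hc : 0 ≤ c) (h1 : -(c • e) ≤ x)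
    (h2 : x ≤ c • e) : ‖x‖ ≤ c := by
  rw [hnorm x]
  exact csInf_le ⟨0, fun r hr => hr.1⟩ ⟨hc, h1, h2⟩

theorem norm_e_eq_one : ‖e‖ = 1 := by
  refine le_antisymm ?_ ?_
  · refine norm_le_of_le e he haddle hsmulle hunit harch hnorm he0 e 1 zero_le_one ?_ ?_
    · rw [one_smul, le_iff_sub haddle]
      have : e - -e = e + e := by abel
      rw [this]
      exact add_nonneg' haddle he0 he0
    · rw [one_smul]
  · rw [hnorm e]
    refine le_csInf ?_ ?_
    · refine ⟨1, zero_le_one, ?_, by rw [one_smul]⟩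
      rw [one_smul, le_iff_sub haddle]
      have : e - -e = e + e := by abel
      rw [this]
      exact add_nonneg' haddle he0 he0
    · rintro b ⟨hb0, _, hb2⟩
      have : (1 : ℝ) • e ≤ b • e := by rwa [one_smul]
      exact (smul_e_le_iff e he haddle hsmulle he0 _ _).mp this

/-- Existence of a state with a prescribed value `y` at `x ≠ 0`,
provided `t * y ≤ p (t • x)` for all `t`. -/
theorem exists_state (x : A) (hx : x ≠ 0) (y : ℝ)
    (hy : ∀ t : ℝ, t * y ≤ pfun e (t • x)) :
    ∃ μ : A →L[ℝ] ℝ, (μ e = 1 ∧ ‖μ‖ = 1) ∧ μ x = y := by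
  set f : A →ₗ.[ℝ] ℝ := LinearPMap.mkSpanSingleton x y hx with hf
  have hfle : ∀ z : f.domain, f z ≤ pfun e z := by
    rintro ⟨z, hz⟩
    have hz' : z ∈ Submodule.span ℝ {x} := hz
    obtain ⟨c, hc⟩ := Submodule.mem_span_singleton.mp hz'
    subst hc
    have happ : f ⟨c • x, hz⟩ = c • y := LinearPMap.mkSpanSingleton'_apply x y _ c hz
    rw [happ]
    simpa [smul_eq_mul] using hy c
  obtain ⟨g, hg_eq, hg_le⟩ := exists_extension_of_le_sublinear f (pfun e)
    (fun c hc z => pfun_smul e he haddle hsmulle hunit harch he0 c hc z)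
    (fun z w => pfun_add e he haddle hsmulle hunit harch he0 z w) hfle
  have hbound : ∀ z : A, |g z| ≤ 1 * ‖z‖ := by
    intro z
    rw [one_mul, abs_le]
    constructor
    · have h1 : g (-z) ≤ pfun e (-z) := hg_le (-z)
      have h2 : pfun e (-z) ≤ ‖z‖ := by
        have := pfun_le_norm e he haddle hsmulle hunit harch hnorm he0 (-z)
        rwa [norm_neg] at this
      rw [map_neg] at h1
      linarith
    · exact le_trans (hg_le z) (pfun_le_norm e he haddle hsmulle hunit harch hnorm he0 z)
  set μ : A →L[ℝ] ℝ := g.mkContinuous 1 hbound with hμ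
  have hμ_apply : ∀ z : A, μ z = g z := fun z => rfl
  have hge : μ e = 1 := by
    have h1 : g e ≤ 1 := by
      have := hg_le e
      rwa [show pfun e e = 1 by
        simpa using pfun_smul_e e he haddle hsmulle hunit harch he0 1] at this
    have h2 : g (-e) ≤ -1 := by
      have := hg_le (-e)
      rwa [show pfun e (-e) = -1 by
        simpa using pfun_smul_e e he haddle hsmulle hunit harch he0 (-1)] at this
    rw [map_neg] at h2
    rw [hμ_apply]
    linarith
  have hgx : μ x = y := by
    have hmem : x ∈ f.domain := Submodule.mem_span_singleton_self x
    have := hg_eq ⟨x, hmem⟩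
    rw [hμ_apply]
    rw [this]
    exact LinearPMap.mkSpanSingleton_apply ℝ ℝ hx y
  refine ⟨μ, ⟨hge, ?_⟩, hgx⟩
  refine le_antisymm (g.mkContinuous_norm_le zero_le_one hbound) ?_
  have h3 := μ.le_opNorm e
  rw [hge, norm_e_eq_one e he haddle hsmulle hunit harch hnorm he0, mul_one] at h3
  simpa using h3

end norm


end OUAux
open scoped ENNReal

/-- A state of an order-unit space `(A, e)`. -/
def IsState {A : Type*} [NormedAddCommGroup A] [NormedSpace ℝ A] (e : A)
    (μ : A →L[ℝ] ℝ) : Prop :=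
  μ e = 1 ∧ ‖μ‖ = 1

/-- The metric `ρ_L` on the state space determined by a Lipschitz seminorm `L`:
`ρ_L(μ,ν) = sup {|μ(a) - ν(a)| : L(a) ≤ 1}`, possibly `+∞`. -/
noncomputable def rhoL {A : Type*} [NormedAddCommGroup A] [NormedSpace ℝ A]
    (L : A → ℝ) (μ ν : A →L[ℝ] ℝ) : ℝ≥0∞ :=
  ⨆ (a : A) (_ : L a ≤ 1), ENNReal.ofReal |μ a - ν a|

/-- For `r ≥ 0`: `ρ_L(μ,ν) ≤ 2r` for all states `μ, ν` iff
`‖ã‖~ ≤ r·L~(ã)` for all `a ∈ A`, where `‖·‖~` and `L~` are the quotient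
seminorms on `A/(ℝe)`. -/
theorem stmt_2 {A : Type*} [NormedAddCommGroup A] [NormedSpace ℝ A] [PartialOrder A]
    (e : A) (he : e ≠ 0)
    (haddle : ∀ a b c : A, a ≤ b → a + c ≤ b + c)
    (hsmulle : ∀ (r : ℝ) (a : A), 0 ≤ r → 0 ≤ a → 0 ≤ r • a)
    (hunit : ∀ a : A, ∃ r : ℝ, a ≤ r • e)
    (harch : ∀ a : A, (∀ r : ℝ, 0 < r → a ≤ r • e) → a ≤ 0)
    (hnorm : ∀ a : A, ‖a‖ = sInf {r : ℝ | 0 ≤ r ∧ -(r • e) ≤ a ∧ a ≤ r • e})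
    (L : A → ℝ)
    (hLadd : ∀ a b : A, L (a + b) ≤ L a + L b)
    (hLsmul : ∀ (t : ℝ) (a : A), L (t • a) = |t| * L a)
    (hLnull : ∀ a : A, L a = 0 ↔ ∃ t : ℝ, a = t • e)
    (r : ℝ) (hr : 0 ≤ r) :
    (∀ μ ν : A →L[ℝ] ℝ, IsState e μ → IsState e ν →
        rhoL L μ ν ≤ ENNReal.ofReal (2 * r)) ↔
      (∀ a : A, sInf {c : ℝ | ∃ s : ℝ, c = ‖a + s • e‖} ≤
        r * sInf {c : ℝ | ∃ s : ℝ, c = L (a + s • e)}) := by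
  classical
  have he0 : 0 ≤ e := OUAux.e_nonneg e he haddle hsmulle hnorm
  have hL0 : ∀ a : A, 0 ≤ L a := by
    intro a
    have h1 : L 0 = 0 := by simpa using hLsmul 0 a
    have h2 : L (-a) = L a := by simpa using hLsmul (-1) a
    have h3 := hLadd a (-a)
    rw [add_neg_cancel, h1, h2] at h3
    linarith
  constructor
  · -- (1) → (2)
    intro hyp a
    set SL := {c : ℝ | ∃ s : ℝ, c = L (a + s • e)} with hSLdef
    set Sn := {c : ℝ | ∃ s : ℝ, c = ‖a + s • e‖} with hSndef
    have hSLne : SL.Nonempty := ⟨L (a + (0 : ℝ) • e), 0, rfl⟩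
    have hSL0 : ∀ c ∈ SL, (0 : ℝ) ≤ c := by rintro c ⟨s, rfl⟩; exact hL0 _
    have hSnbdd : BddBelow Sn := ⟨0, by rintro c ⟨s, rfl⟩; exact norm_nonneg _⟩
    have hIL : 0 ≤ sInf SL := le_csInf hSLne hSL0
    by_cases ha : a = 0
    · subst ha
      have h1 : sInf Sn ≤ 0 := by
        refine csInf_le hSnbdd ⟨0, ?_⟩
        simp
      have h2 : 0 ≤ r * sInf SL := mul_nonneg hr hIL
      linarith
    · set M := OUAux.pfun e a with hM
      set m := -OUAux.pfun e (-a) with hm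
      have hMm : m ≤ M := by
        have h1 : OUAux.pfun e (a + -a) ≤ OUAux.pfun e a + OUAux.pfun e (-a) :=
          OUAux.pfun_add e he haddle hsmulle hunit harch he0 a (-a)
        rw [add_neg_cancel, OUAux.pfun_zero e he haddle hsmulle hunit harch he0] at h1
        rw [hM, hm]; linarith
      have hyM : ∀ t : ℝ, t * M ≤ OUAux.pfun e (t • a) := by
        intro t
        rcases lt_trichotomy t 0 with ht | ht | ht
        · have h1 : OUAux.pfun e (t • a) = (-t) * OUAux.pfun e (-a) := by
            have := OUAux.pfun_smul e he haddle hsmulle hunit harch he0 (-t)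
              (by linarith) (-a)
            rw [smul_neg, neg_smul, neg_neg] at this
            exact this
          have hpa : OUAux.pfun e (-a) = -m := by rw [hm]; ring
          rw [h1, hpa]
          nlinarith [hMm]
        · subst ht
          simp [OUAux.pfun_zero e he haddle hsmulle hunit harch he0]
        · rw [OUAux.pfun_smul e he haddle hsmulle hunit harch he0 t ht a, hM]
      have hym : ∀ t : ℝ, t * m ≤ OUAux.pfun e (t • a) := by
        intro t
        rcases lt_trichotomy t 0 with ht | ht | ht
        · have h1 : OUAux.pfun e (t • a) = (-t) * OUAux.pfun e (-a) := by
            have := OUAux.pfun_smul e he haddle hsmulle hunit harch he0 (-t)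
              (by linarith) (-a)
            rw [smul_neg, neg_smul, neg_neg] at this
            exact this
          have hpa : OUAux.pfun e (-a) = -m := by rw [hm]; ring
          rw [h1, hpa]
          nlinarith []
        · subst ht
          simp [OUAux.pfun_zero e he haddle hsmulle hunit harch he0]
        · rw [OUAux.pfun_smul e he haddle hsmulle hunit harch he0 t ht a]
          nlinarith [hMm]
      obtain ⟨μ, hμs, hμa⟩ :=
        OUAux.exists_state e he haddle hsmulle hunit harch hnorm he0 a ha M hyM
      obtain ⟨ν, hνs, hνa⟩ :=
        OUAux.exists_state e he haddle hsmulle hunit harch hnorm he0 a ha m hym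
      have key : ∀ s : ℝ, M - m ≤ 2 * r * L (a + s • e) := by
        intro s
        set b := a + s • e with hb
        have hdiff : μ b - ν b = M - m := by
          rw [hb, map_add, map_add, map_smul, map_smul, hμs.1, hνs.1, hμa, hνa]
          simp
        rcases (hL0 b).eq_or_lt with hLb | hLb
        · obtain ⟨t, htb⟩ := (hLnull b).mp hLb.symm
          have : μ b - ν b = 0 := by
            rw [htb, map_smul, map_smul, hμs.1, hνs.1]
            simp
          rw [this] at hdiff
          rw [← hLb]
          linarith
        · set b' := (L b)⁻¹ • b with hb'
          have hLb' : L b' ≤ 1 := by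
            rw [hb', hLsmul, abs_of_pos (inv_pos.mpr hLb), inv_mul_cancel₀ (ne_of_gt hLb)]
          have h1 : ENNReal.ofReal |μ b' - ν b'| ≤ rhoL L μ ν := by
            rw [rhoL]
            exact le_iSup₂ (f := fun (x : A) (_ : L x ≤ 1) => ENNReal.ofReal |μ x - ν x|)
              b' hLb'
          have h2 : ENNReal.ofReal |μ b' - ν b'| ≤ ENNReal.ofReal (2 * r) :=
            le_trans h1 (hyp μ ν hμs hνs)
          have h3 : |μ b' - ν b'| ≤ 2 * r :=
            (ENNReal.ofReal_le_ofReal_iff (by positivity)).mp h2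
          have h4 : μ b' - ν b' = (L b)⁻¹ * (μ b - ν b) := by
            rw [hb', map_smul, map_smul]
            simp [smul_eq_mul]; ring
          have h5 : |μ b - ν b| = L b * |μ b' - ν b'| := by
            rw [h4, abs_mul, abs_of_pos (inv_pos.mpr hLb)]
            field_simp
          have h6 : M - m ≤ |μ b - ν b| := by
            rw [hdiff] at *
            exact le_abs_self _
          calc M - m ≤ |μ b - ν b| := h6
            _ = L b * |μ b' - ν b'| := h5
            _ ≤ L b * (2 * r) := mul_le_mul_of_nonneg_left h3 (le_of_lt hLb)
            _ = 2 * r * L b := by ring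
      have hMm2r : M - m ≤ 2 * r * sInf SL := by
        rcases hr.eq_or_lt with hr0 | hr0
        · have := key 0
          rw [← hr0] at this ⊢
          simpa using this
        · have hlb : ∀ c ∈ SL, (M - m) / (2 * r) ≤ c := by
            rintro c ⟨s, rfl⟩
            rw [div_le_iff₀ (by positivity)]
            have := key s
            linarith
          have := le_csInf hSLne hlb
          rw [div_le_iff₀ (by positivity)] at this
          linarith
      -- the norm bound
      set s₀ : ℝ := -((M + m) / 2) with hs₀
      have hc0 : (0 : ℝ) ≤ (M - m) / 2 := by linarith
      have hupper : a + s₀ • e ≤ ((M - m) / 2) • e := by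
        have h1 : a ≤ M • e := OUAux.pfun_spec e he haddle hsmulle hunit harch he0 a
        have h2 := OUAux.add_le_add'' haddle h1 (le_refl (s₀ • e))
        rw [← add_smul] at h2
        have hscal : M + s₀ = (M - m) / 2 := by rw [hs₀]; ring
        rwa [hscal] at h2
      have hlower : -(((M - m) / 2) • e) ≤ a + s₀ • e := by
        have hpa : OUAux.pfun e (-a) = -m := by rw [hm]; ring
        have h1 : -a ≤ (-m) • e := by
          have := OUAux.pfun_spec e he haddle hsmulle hunit harch he0 (-a)
          rwa [hpa] at this
        have h3 : m • e ≤ a := by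
          have h := OUAux.neg_le_neg' haddle h1
          simpa using h
        have h4 := OUAux.add_le_add'' haddle h3 (le_refl (s₀ • e))
        rw [← add_smul] at h4
        have hscal : m + s₀ = -((M - m) / 2) := by rw [hs₀]; ring
        rw [hscal, neg_smul] at h4
        exact h4
      have hnb : ‖a + s₀ • e‖ ≤ (M - m) / 2 :=
        OUAux.norm_le_of_le e he haddle hsmulle hunit harch hnorm he0 _ _ hc0 hlower hupper
      have h7 : sInf Sn ≤ ‖a + s₀ • e‖ := csInf_le hSnbdd ⟨s₀, rfl⟩
      calc sInf Sn ≤ ‖a + s₀ • e‖ := h7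
        _ ≤ (M - m) / 2 := hnb
        _ ≤ r * sInf SL := by linarith
  · -- (2) → (1)
    intro hyp μ ν hμs hνs
    rw [rhoL]
    refine iSup₂_le fun a ha => ?_
    refine ENNReal.ofReal_le_ofReal ?_
    set SL := {c : ℝ | ∃ s : ℝ, c = L (a + s • e)} with hSLdef
    set Sn := {c : ℝ | ∃ s : ℝ, c = ‖a + s • e‖} with hSndef
    have hSLbdd : BddBelow SL := ⟨0, by rintro c ⟨s, rfl⟩; exact hL0 _⟩
    have key : ∀ s : ℝ, |μ a - ν a| ≤ 2 * ‖a + s • e‖ := by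
      intro s
      have h1 : μ a - ν a = μ (a + s • e) - ν (a + s • e) := by
        rw [map_add, map_add, map_smul, map_smul, hμs.1, hνs.1]
        simp
      have h2 : |μ (a + s • e)| ≤ ‖a + s • e‖ := by
        have := μ.le_opNorm (a + s • e)
        rw [hμs.2, one_mul] at this
        simpa [Real.norm_eq_abs] using this
      have h3 : |ν (a + s • e)| ≤ ‖a + s • e‖ := by
        have := ν.le_opNorm (a + s • e)
        rw [hνs.2, one_mul] at this
        simpa [Real.norm_eq_abs] using this
      rw [h1]
      calc |μ (a + s • e) - ν (a + s • e)| ≤ |μ (a + s • e)| + |ν (a + s • e)| :=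
            abs_sub _ _
        _ ≤ 2 * ‖a + s • e‖ := by linarith
    have h4 : |μ a - ν a| / 2 ≤ sInf Sn := by
      refine le_csInf ⟨‖a + (0 : ℝ) • e‖, 0, rfl⟩ ?_
      rintro c ⟨s, rfl⟩
      linarith [key s]
    have h5 : sInf Sn ≤ r * sInf SL := hyp a
    have h6 : sInf SL ≤ L a := by
      have := csInf_le hSLbdd ⟨0, rfl⟩
      simpa using this
    have h7 : r * sInf SL ≤ r * L a := mul_le_mul_of_nonneg_left h6 hr
    have h8 : r * L a ≤ r := by nlinarith [hL0 a]
    linarith
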